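/- If u ∈ Ḣ¹(ℝ^N) satisfies ∫|∇u|² < ∫|∇W|², then E(u) ≥ 0. -/

import Mathlib

open MeasureTheory

/-- If `u ∈ Ḣ¹(ℝ^N)` satisfies the Sobolev inequality with best constant `C` and
`∫|∇u|² < ∫|∇W|² = C^{-N}`, then `E(u) ≥ 0`. -/
theorem stmt7 (N : ℕ) (hN : 3 ≤ N) (C : ℝ) (hC : 0 < C)
    (u : EuclideanSpace ℝ (Fin N) → ℝ)
    (hSob : (∫ x, |u x| ^ ((2 * (N : ℝ)) / ((N : ℝ) - 2))) ^ (((N : ℝ) - 2) / (2 * (N : ℝ)))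
        ≤ C * (∫ x, ‖gradient u x‖ ^ 2) ^ ((1 : ℝ) / 2))
    (hgrad : (∫ x, ‖gradient u x‖ ^ 2) < C ^ (-(N : ℝ))) :
    0 ≤ (1 / 2) * (∫ x, ‖gradient u x‖ ^ 2)
        - (((N : ℝ) - 2) / (2 * (N : ℝ))) * (∫ x, |u x| ^ ((2 * (N : ℝ)) / ((N : ℝ) - 2))) := by
  set T : ℝ := ∫ x, ‖gradient u x‖ ^ 2 with hT
  set A : ℝ := ∫ x, |u x| ^ ((2 * (N : ℝ)) / ((N : ℝ) - 2)) with hA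
  have hn : (3 : ℝ) ≤ (N : ℝ) := by exact_mod_cast hN
  have hn2 : (0 : ℝ) < (N : ℝ) - 2 := by linarith
  have hn0 : (0 : ℝ) < (N : ℝ) := by linarith
  set p : ℝ := (2 * (N : ℝ)) / ((N : ℝ) - 2) with hp
  set θ : ℝ := ((N : ℝ) - 2) / (2 * (N : ℝ)) with hθ
  have hp0 : 0 < p := by positivity
  have hθ0 : 0 < θ := by positivity
  have hT0 : 0 ≤ T := integral_nonneg fun x => by positivity
  have hA0 : 0 ≤ A := integral_nonneg fun x => Real.rpow_nonneg (abs_nonneg _) _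
  have hθp : θ * p = 1 := by
    rw [hθ, hp]; field_simp
  -- raise hSob to power p
  have key : A ≤ C ^ p * T ^ ((N : ℝ) / ((N : ℝ) - 2)) := by
    have h1 : (A ^ θ) ^ p ≤ (C * T ^ ((1 : ℝ) / 2)) ^ p :=
      Real.rpow_le_rpow (Real.rpow_nonneg hA0 _) hSob hp0.le
    have h2 : (A ^ θ) ^ p = A := by
      rw [← Real.rpow_mul hA0, hθp, Real.rpow_one]
    have h3 : (C * T ^ ((1 : ℝ) / 2)) ^ p = C ^ p * T ^ ((N : ℝ) / ((N : ℝ) - 2)) := by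
      rw [Real.mul_rpow hC.le (Real.rpow_nonneg hT0 _), ← Real.rpow_mul hT0]
      congr 1
      rw [hp]; field_simp
    rw [h2, h3] at h1
    exact h1
  -- A ≤ T
  have hAT : A ≤ T := by
    have hexp : (N : ℝ) / ((N : ℝ) - 2) = 2 / ((N : ℝ) - 2) + 1 := by
      field_simp; ring
    have hsplit : T ^ ((N : ℝ) / ((N : ℝ) - 2)) = T ^ ((2 : ℝ) / ((N : ℝ) - 2)) * T := by
      rw [hexp, Real.rpow_add' hT0 (by rw [← hexp]; positivity), Real.rpow_one]
    have hTle : T ^ ((2 : ℝ) / ((N : ℝ) - 2)) ≤ (C ^ (-(N : ℝ))) ^ ((2 : ℝ) / ((N : ℝ) - 2)) :=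
      Real.rpow_le_rpow hT0 hgrad.le (by positivity)
    have hCpow : (C ^ (-(N : ℝ))) ^ ((2 : ℝ) / ((N : ℝ) - 2)) = C ^ (-p) := by
      rw [← Real.rpow_mul hC.le]
      congr 1
      rw [hp]; ring
    calc A ≤ C ^ p * T ^ ((N : ℝ) / ((N : ℝ) - 2)) := key
      _ = C ^ p * (T ^ ((2 : ℝ) / ((N : ℝ) - 2)) * T) := by rw [hsplit]
      _ ≤ C ^ p * ((C ^ (-(N : ℝ))) ^ ((2 : ℝ) / ((N : ℝ) - 2)) * T) := by
          apply mul_le_mul_of_nonneg_left (mul_le_mul_of_nonneg_right hTle hT0)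
            (Real.rpow_nonneg hC.le p)
      _ = C ^ p * (C ^ (-p) * T) := by rw [hCpow]
      _ = T := by
          rw [← mul_assoc, ← Real.rpow_add hC, add_neg_cancel, Real.rpow_zero, one_mul]
  have hθhalf : θ ≤ 1 / 2 := by
    rw [hθ, div_le_div_iff₀ (by positivity) (by norm_num)]; linarith
  nlinarith [mul_le_mul_of_nonneg_left hAT hθ0.le]
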